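/- Let M be an additive abelian group, let Ψ : M → M be a group endomorphism, and let P be a monic polynomial with integer coefficients such that every complex root of P is a root of unity. If P(Ψ) = 0 (evaluating P at Ψ in the ring of group endomorphisms of M, with the constant term acting as multiplication by that integer), then there exist positive integers ℓ and m such that (Ψ^ℓ − id_M)^m = 0. -/

import Mathlib

open Polynomial

/-- If a group endomorphism `Ψ` of an abelian group is killed by a monic integer
polynomial all of whose complex roots are roots of unity, then `(Ψ^ℓ - id)^m = 0`
for some positive integers `ℓ`, `m`. -/
theorem stmt_2 (M : Type*) [AddCommGroup M] (Ψ : AddMonoid.End M)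
    (P : Polynomial ℤ) (hP : P.Monic)
    (hroots : ∀ z : ℂ, Polynomial.aeval z P = 0 → ∃ k : ℕ, 0 < k ∧ z ^ k = 1)
    (hPΨ : Polynomial.aeval Ψ P = 0) :
    ∃ ℓ m : ℕ, 0 < ℓ ∧ 0 < m ∧ (Ψ ^ ℓ - 1) ^ m = 0 := by
  classical
  set Q : Polynomial ℂ := P.map (algebraMap ℤ ℂ) with hQdef
  have hQmonic : Q.Monic := hP.map _
  have hk : ∀ z ∈ Q.roots, ∃ k : ℕ, 0 < k ∧ z ^ k = 1 := by
    intro z hz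
    apply hroots
    rw [Polynomial.aeval_def, ← Polynomial.eval_map]
    exact Polynomial.isRoot_of_mem_roots hz
  choose! k hkpos hkpow using hk
  set ℓ := ∏ z ∈ Q.roots.toFinset, k z with hℓ
  have hℓpos : 0 < ℓ :=
    Finset.prod_pos fun z hz => hkpos z (Multiset.mem_toFinset.mp hz)
  have hroot1 : ∀ z ∈ Q.roots, z ^ ℓ = 1 := by
    intro z hz
    obtain ⟨c, hc⟩ := Finset.dvd_prod_of_mem k (Multiset.mem_toFinset.mpr hz)
    rw [hℓ, hc, pow_mul, hkpow z hz, one_pow]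
  set m := max P.natDegree 1 with hm
  have hmpos : 0 < m := lt_of_lt_of_le one_pos (le_max_right _ _)
  set S : Polynomial ℂ := X ^ ℓ - 1 with hS
  have hSmonic : S.Monic := by
    have := Polynomial.monic_X_pow_sub_C (1 : ℂ) hℓpos.ne'
    simpa using this
  have hSne : S ≠ 0 := hSmonic.ne_zero
  have hle : Q.roots ≤ (S ^ m).roots := by
    rw [Polynomial.roots_pow, Multiset.le_iff_count]
    intro z
    by_cases hz : z ∈ Q.roots
    · have h1 : 1 ≤ Multiset.count z S.roots := by
        rw [Multiset.one_le_count_iff_mem, Polynomial.mem_roots hSne]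
        simp [hS, IsRoot, hroot1 z hz]
      have h2 : Multiset.count z Q.roots ≤ m := by
        calc Multiset.count z Q.roots ≤ Multiset.card Q.roots :=
              Multiset.count_le_card _ _
          _ ≤ Q.natDegree := Polynomial.card_roots' Q
          _ = P.natDegree := hP.natDegree_map _
          _ ≤ m := le_max_left _ _
      rw [Multiset.count_nsmul]
      calc Multiset.count z Q.roots ≤ m := h2
        _ ≤ m * Multiset.count z S.roots := Nat.le_mul_of_pos_right _ h1
    · simp [Multiset.count_eq_zero_of_notMem hz]
  have hQdvd : Q ∣ S ^ m := by
    have hsplit : Q = (Q.roots.map fun z => X - C z).prod :=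
      Polynomial.Splits.eq_prod_roots_of_monic
        (IsAlgClosed.splits Q) hQmonic
    rw [hsplit]
    refine dvd_trans ?_ (Polynomial.prod_multiset_X_sub_C_dvd (S ^ m))
    exact Multiset.prod_dvd_prod_of_le (Multiset.map_le_map hle)
  have hPdvd : P ∣ (X ^ ℓ - 1 : Polynomial ℤ) ^ m := by
    have hinj : Function.Injective (algebraMap ℤ ℂ) :=
      (algebraMap ℤ ℂ).injective_int
    rw [← Polynomial.map_dvd_map (algebraMap ℤ ℂ) hinj hP]
    rw [Polynomial.map_pow, Polynomial.map_sub, Polynomial.map_pow,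
      Polynomial.map_X, Polynomial.map_one]
    exact hQdvd
  obtain ⟨T, hT⟩ := hPdvd
  refine ⟨ℓ, m, hℓpos, hmpos, ?_⟩
  have := congrArg (Polynomial.aeval Ψ) hT
  simpa [map_pow, map_sub, map_mul, hPΨ] using this
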